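/- There is a universal constant C > 0 such that the following holds. Let δ ≥ 1 and suppose the metric space (X, dist) has doubling dimension at most δ, i.e. every ball in X can be covered by at most 2^δ balls of half its radius. Then for every SNN instance in X, there exists an assignment p_1, …, p_k with all p_i ∈ P̂ whose SNN cost is at most C · δ · Cost(Q, G, P); i.e., the pruning gap is O(δ). -/

import Mathlib

open Finset

/-- The symmetric pairwise-distance function induced on unordered pairs by an
assignment `p : V → X`. -/
noncomputable def pairDist {V X : Type*} [MetricSpace X] (p : V → X) : Sym2 V → ℝ :=
  Sym2.lift ⟨fun i j => dist (p i) (p j), fun i j => dist_comm (p i) (p j)⟩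

namespace SNNPG



/-- harmonic number -/
noncomputable def harm (n : ℕ) : ℝ := ∑ i ∈ Finset.range n, 1/((i:ℝ)+1)

lemma harm_nonneg (n : ℕ) : 0 ≤ harm n := by
  apply Finset.sum_nonneg; intro i _; positivity

lemma harm_succ (n : ℕ) : harm (n+1) = harm n + 1/((n:ℝ)+1) := by
  simp [harm, Finset.sum_range_succ]

lemma harm_mono : Monotone harm := by
  intro a b hab
  apply Finset.sum_le_sum_of_subset_of_nonneg (Finset.range_subset_range.mpr hab)
  intro i _ _; positivity

lemma harm_le_log (n : ℕ) (hn : 1 ≤ n) : harm n ≤ 1 + Real.log n := by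
  induction n with
  | zero => omega
  | succ m ih =>
    rcases Nat.eq_or_lt_of_le hn with h1 | h1
    · simp [harm, ← h1]
    · have hm : 1 ≤ m := by omega
      have hlog : 1/((m:ℝ)+1) ≤ Real.log (m+1) - Real.log m := by
        have hm0 : (0:ℝ) < m := by exact_mod_cast hm
        have h := Real.log_le_sub_one_of_pos (x := (m:ℝ)/((m:ℝ)+1)) (by positivity)
        rw [Real.log_div (by positivity) (by positivity)] at h
        have : (m:ℝ)/((m:ℝ)+1) - 1 = -(1/((m:ℝ)+1)) := by field_simp; ring
        rw [this] at h
        linarith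
      have := ih hm
      rw [harm_succ]
      push_cast
      linarith

/-- sum of inverse ranks is at most the harmonic number -/
lemma sum_inv_rank_le {ι : Type*} [DecidableEq ι] (S : Finset ι) (f : ι → ℝ) :
    ∑ w ∈ S, 1/(((S.filter (fun w' => f w' ≤ f w)).card : ℝ)) ≤ harm S.card := by
  classical
  induction S using Finset.strongInduction with
  | _ S ih =>
    rcases S.eq_empty_or_nonempty with rfl | hS
    · simp [harm]
    · obtain ⟨w₀, hw₀, hmax⟩ := S.exists_max_image f hS
      have hsub : S.erase w₀ ⊂ S := Finset.erase_ssubset hw₀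
      have key := ih _ hsub
      -- relate
      have hcard : (S.erase w₀).card = S.card - 1 := Finset.card_erase_of_mem hw₀
      have hpos : 1 ≤ S.card := Finset.card_pos.mpr hS
      have h1 : ∑ w ∈ S, 1/(((S.filter (fun w' => f w' ≤ f w)).card : ℝ))
          = 1/(((S.filter (fun w' => f w' ≤ f w₀)).card : ℝ))
            + ∑ w ∈ S.erase w₀, 1/(((S.filter (fun w' => f w' ≤ f w)).card : ℝ)) := by
        rw [← Finset.add_sum_erase _ _ hw₀]
      have h2 : (S.filter (fun w' => f w' ≤ f w₀)) = S := by
        apply Finset.filter_true_of_mem; intro w' hw'; exact hmax w' hw'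
      have h3 : ∀ w ∈ S.erase w₀,
          1/(((S.filter (fun w' => f w' ≤ f w)).card : ℝ))
            ≤ 1/((((S.erase w₀).filter (fun w' => f w' ≤ f w)).card : ℝ)) := by
        intro w hw
        have hwS := Finset.mem_of_mem_erase hw
        have hsubf : ((S.erase w₀).filter (fun w' => f w' ≤ f w)) ⊆ (S.filter (fun w' => f w' ≤ f w)) :=
          Finset.filter_subset_filter _ (Finset.erase_subset _ _)
        have hne : w ∈ ((S.erase w₀).filter (fun w' => f w' ≤ f w)) :=
          Finset.mem_filter.mpr ⟨hw, le_refl _⟩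
        have hc1 : 0 < ((S.erase w₀).filter (fun w' => f w' ≤ f w)).card :=
          Finset.card_pos.mpr ⟨w, hne⟩
        have hc2 := Finset.card_le_card hsubf
        apply one_div_le_one_div_of_le
        · exact_mod_cast hc1
        · exact_mod_cast hc2
      calc ∑ w ∈ S, 1/(((S.filter (fun w' => f w' ≤ f w)).card : ℝ))
          = 1/((S.card : ℝ)) + ∑ w ∈ S.erase w₀, 1/(((S.filter (fun w' => f w' ≤ f w)).card : ℝ)) := by
            rw [h1, h2]
        _ ≤ 1/((S.card : ℝ)) + ∑ w ∈ S.erase w₀, 1/((((S.erase w₀).filter (fun w' => f w' ≤ f w)).card : ℝ)) := by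
            apply add_le_add_right; exact Finset.sum_le_sum h3
        _ ≤ 1/((S.card : ℝ)) + harm (S.erase w₀).card := by linarith [key]
        _ = harm S.card := by
            rw [hcard]
            obtain ⟨m, hm⟩ : ∃ m, S.card = m + 1 := ⟨S.card - 1, by omega⟩
            rw [hm]; simp only [Nat.add_sub_cancel]
            rw [harm_succ]; push_cast; ring





/-- number of `r : Fin n` with `(r:ℝ)` in a real interval `[lo, lo+len]` is at most `len+1`. -/
lemma card_fin_interval_le {n : ℕ} (lo len : ℝ) (hlen : 0 ≤ len) :
    (((univ : Finset (Fin n)).filter (fun r : Fin n => lo ≤ (r:ℝ) ∧ (r:ℝ) ≤ lo + len)).card : ℝ)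
      ≤ len + 1 := by
  classical
  set T := ((univ : Finset (Fin n)).filter (fun r : Fin n => lo ≤ (r:ℝ) ∧ (r:ℝ) ≤ lo + len)) with hT
  have hinj : ∀ r ∈ T, ((r : Fin n) : ℤ) ∈ Finset.Icc ⌈lo⌉ ⌊lo + len⌋ := by
    intro r hr
    rw [hT, Finset.mem_filter] at hr
    obtain ⟨-, h1, h2⟩ := hr
    rw [Finset.mem_Icc]
    exact ⟨Int.ceil_le.mpr (by exact_mod_cast h1), Int.le_floor.mpr (by exact_mod_cast h2)⟩
  have hcard : T.card ≤ (Finset.Icc ⌈lo⌉ ⌊lo + len⌋).card := by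
    apply Finset.card_le_card_of_injOn (fun r => ((r : Fin n) : ℤ)) hinj
    intro a _ b _ hab
    simp only at hab
    have : ((a : Fin n) : ℕ) = ((b : Fin n) : ℕ) := by exact_mod_cast hab
    exact Fin.ext this
  have h2 : ((Finset.Icc ⌈lo⌉ ⌊lo + len⌋).card : ℝ) ≤ len + 1 := by
    rw [Int.card_Icc]
    rcases le_or_gt ⌈lo⌉ (⌊lo + len⌋ + 1) with h | h
    · have he : ((⌊lo + len⌋ + 1 - ⌈lo⌉).toNat : ℤ) = ⌊lo + len⌋ + 1 - ⌈lo⌉ :=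
        Int.toNat_of_nonneg (by omega)
      have he2 : ((⌊lo + len⌋ + 1 - ⌈lo⌉).toNat : ℝ) = (⌊lo + len⌋ : ℝ) + 1 - (⌈lo⌉ : ℝ) := by
        exact_mod_cast congrArg (fun z : ℤ => (z : ℝ)) he
      rw [he2]
      have hf : (⌊lo + len⌋ : ℝ) ≤ lo + len := Int.floor_le _
      have hc : lo ≤ (⌈lo⌉ : ℝ) := Int.le_ceil _
      linarith
    · have : (⌊lo + len⌋ + 1 - ⌈lo⌉).toNat = 0 := by omega
      rw [this]; push_cast; linarith
  calc (T.card : ℝ) ≤ ((Finset.Icc ⌈lo⌉ ⌊lo + len⌋).card : ℝ) := by exact_mod_cast hcard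
    _ ≤ len + 1 := h2

/-- counting version of: each element of `S` is the `π`-minimum of `S` with probability `≤ 1/|S|`. -/
lemma perm_min_count {k : ℕ} (S : Finset (Fin k)) (w : Fin k) (hw : w ∈ S) :
    ((univ : Finset (Equiv.Perm (Fin k))).filter
        (fun π => ∀ w' ∈ S, w' ≠ w → π w < π w')).card * S.card
      ≤ Nat.factorial k := by
  classical
  set E : Fin k → Finset (Equiv.Perm (Fin k)) :=
    fun v => (univ : Finset (Equiv.Perm (Fin k))).filter
        (fun π => ∀ w' ∈ S, w' ≠ v → π v < π w') with hE
  have hmemE : ∀ v π, π ∈ E v ↔ ∀ w' ∈ S, w' ≠ v → π v < π w' := by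
    intro v π; rw [hE]; simp
  -- all E v for v ∈ S have the same cardinality
  have hcardeq : ∀ v ∈ S, (E v).card = (E w).card := by
    intro v hv
    rcases eq_or_ne v w with rfl | hvw
    · rfl
    -- bijection E v → E w via π ↦ π ∘ swap v w
    apply Finset.card_bij (fun π _ => (Equiv.swap v w).trans π)
    · intro π hπ
      rw [hmemE] at hπ ⊢
      intro w' hw' hne
      simp only [Equiv.trans_apply]
      rw [Equiv.swap_apply_right]
      rcases eq_or_ne w' v with rfl | hne2
      · rw [Equiv.swap_apply_left]
        exact hπ w hw (Ne.symm hvw)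
      · rw [Equiv.swap_apply_of_ne_of_ne hne2 hne]
        exact hπ w' hw' hne2
    · intro a ha b hb hab
      have : ∀ x, a x = b x := by
        intro x
        have := congrArg (fun (e : Equiv.Perm (Fin k)) => e ((Equiv.swap v w) x)) hab
        simpa [Equiv.swap_apply_self] using this
      exact Equiv.ext this
    · intro π hπ
      refine ⟨(Equiv.swap v w).trans π, ?_, ?_⟩
      · rw [hmemE] at hπ ⊢
        intro w' hw' hne
        simp only [Equiv.trans_apply]
        rw [Equiv.swap_apply_left]
        rcases eq_or_ne w' w with rfl | hne2
        · rw [Equiv.swap_apply_right]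
          exact hπ v hv hvw
        · rw [Equiv.swap_apply_of_ne_of_ne hne hne2]
          exact hπ w' hw' hne2
      · apply Equiv.ext; intro x
        simp [Equiv.trans_apply, Equiv.swap_apply_self]
  -- E v pairwise disjoint over v ∈ S
  have hdisj : (S : Set (Fin k)).PairwiseDisjoint E := by
    intro a ha b hb hab
    apply Finset.disjoint_left.mpr
    intro π hπa hπb
    rw [hmemE] at hπa hπb
    have h1 := hπa b hb (Ne.symm hab)
    have h2 := hπb a ha hab
    exact absurd (h1.trans h2) (lt_irrefl _)
  have hsum : ∑ v ∈ S, (E v).card ≤ Nat.factorial k := by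
    rw [← Finset.card_biUnion hdisj]
    calc (S.biUnion E).card ≤ (univ : Finset (Equiv.Perm (Fin k))).card :=
          Finset.card_le_card (Finset.subset_univ _)
      _ = Nat.factorial k := by
          rw [Finset.card_univ]
          rw [Fintype.card_perm, Fintype.card_fin]
  calc (E w).card * S.card = ∑ _v ∈ S, (E w).card := by rw [Finset.sum_const, smul_eq_mul, mul_comm]
    _ = ∑ v ∈ S, (E v).card := Finset.sum_congr rfl (fun v hv => (hcardeq v hv).symm)
    _ ≤ Nat.factorial k := hsum





variable {X : Type} [MetricSpace X] {k : ℕ}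

/-- greedy maximal separated subset -/
noncomputable def gnet (x : Fin k → X) (γ : ℝ) (S : Finset (Fin k)) : Finset (Fin k) :=
  if h : S.Nonempty then
    let a := S.min' h
    insert a (gnet x γ (S.filter (fun i => i ≠ a ∧ γ < dist (x i) (x a))))
  else ∅
termination_by S.card
decreasing_by
  apply Finset.card_lt_card
  rw [Finset.ssubset_iff_of_subset (Finset.filter_subset _ _)]
  exact ⟨S.min' h, S.min'_mem h, by simp⟩

lemma gnet_props (x : Fin k → X) (γ : ℝ) (S : Finset (Fin k)) :
    (gnet x γ S ⊆ S)
    ∧ (∀ w ∈ gnet x γ S, ∀ w' ∈ gnet x γ S, w ≠ w' → γ < dist (x w) (x w'))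
    ∧ (0 ≤ γ → ∀ i ∈ S, ∃ w ∈ gnet x γ S, dist (x i) (x w) ≤ γ) := by
  induction S using Finset.strongInduction with
  | _ S ih =>
    rcases S.eq_empty_or_nonempty with rfl | hS
    · rw [gnet]; simp
    · set a := S.min' hS with ha
      set S' := S.filter (fun i => i ≠ a ∧ γ < dist (x i) (x a)) with hS'
      have hssub : S' ⊂ S := by
        rw [hS', Finset.ssubset_iff_of_subset (Finset.filter_subset _ _)]
        exact ⟨a, S.min'_mem hS, by simp⟩
      obtain ⟨ih1, ih2, ih3⟩ := ih S' hssub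
      have hunfold : gnet x γ S = insert a (gnet x γ S') := by
        rw [gnet, dif_pos hS]
      rw [hunfold]
      refine ⟨?_, ?_, ?_⟩
      · intro w hw
        rcases Finset.mem_insert.mp hw with rfl | hw'
        · exact S.min'_mem hS
        · exact Finset.mem_of_mem_filter w (ih1 hw')
      · intro w hw w' hw' hne
        rcases Finset.mem_insert.mp hw with rfl | hw2
        · rcases Finset.mem_insert.mp hw' with rfl | hw2'
          · exact absurd rfl hne
          · have := (Finset.mem_filter.mp (ih1 hw2')).2.2
            rwa [dist_comm] at this
        · rcases Finset.mem_insert.mp hw' with rfl | hw2'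
          · exact (Finset.mem_filter.mp (ih1 hw2)).2.2
          · exact ih2 w hw2 w' hw2' hne
      · intro hγ i hi
        by_cases hcase : i ≠ a ∧ γ < dist (x i) (x a)
        · have hiS' : i ∈ S' := Finset.mem_filter.mpr ⟨hi, hcase⟩
          obtain ⟨w, hw, hd⟩ := ih3 hγ i hiS'
          exact ⟨w, Finset.mem_insert_of_mem hw, hd⟩
        · refine ⟨a, Finset.mem_insert_self _ _, ?_⟩
          push_neg at hcase
          by_cases hia : i = a
          · subst hia; simpa using hγ
          · exact hcase hia

/-- packing: a `γ`-separated set inside a ball of radius `4γ` has at most `(2^n₀)^3` points -/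
lemma packing (x : Fin k → X) (n₀ : ℕ)
    (hcov : ∀ (z : X) (R : ℝ), ∃ s : Finset X, s.card ≤ 2^n₀ ∧
      ∀ w ∈ Metric.ball z R, ∃ y ∈ s, w ∈ Metric.ball y (R/2))
    (a : X) (γ : ℝ) (hγ : 0 < γ) (S : Finset (Fin k))
    (hsep : ∀ w ∈ S, ∀ w' ∈ S, w ≠ w' → γ < dist (x w) (x w'))
    (hin : ∀ w ∈ S, dist (x w) a < 4*γ) :
    S.card ≤ (2^n₀)^3 := by
  classical
  -- three-fold cover of ball a (4γ) by balls of radius γ/2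
  have key : ∃ s : Finset X, s.card ≤ (2^n₀)^3 ∧
      ∀ w ∈ Metric.ball a (4*γ), ∃ y ∈ s, w ∈ Metric.ball y (γ/2) := by
    obtain ⟨s₁, hs₁c, hs₁⟩ := hcov a (4*γ)
    have e1 : (4*γ)/2 = 2*γ := by ring
    rw [e1] at hs₁
    set f₂ : X → Finset X := fun y => (hcov y (2*γ)).choose with hf₂
    have hf₂spec : ∀ y : X, (f₂ y).card ≤ 2^n₀ ∧
        ∀ w ∈ Metric.ball y (2*γ), ∃ y' ∈ f₂ y, w ∈ Metric.ball y' ((2*γ)/2) :=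
      fun y => (hcov y (2*γ)).choose_spec
    set s₂ := s₁.biUnion f₂ with hs₂
    set f₃ : X → Finset X := fun y => (hcov y γ).choose with hf₃
    have hf₃spec : ∀ y : X, (f₃ y).card ≤ 2^n₀ ∧
        ∀ w ∈ Metric.ball y γ, ∃ y' ∈ f₃ y, w ∈ Metric.ball y' (γ/2) :=
      fun y => (hcov y γ).choose_spec
    refine ⟨s₂.biUnion f₃, ?_, ?_⟩
    · calc (s₂.biUnion f₃).card ≤ ∑ y ∈ s₂, (f₃ y).card := Finset.card_biUnion_le
        _ ≤ ∑ _y ∈ s₂, 2^n₀ := Finset.sum_le_sum (fun y _ => (hf₃spec y).1)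
        _ = s₂.card * 2^n₀ := by rw [Finset.sum_const, smul_eq_mul]
        _ ≤ (2^n₀ * 2^n₀) * 2^n₀ := by
            apply Nat.mul_le_mul_right
            calc s₂.card ≤ ∑ y ∈ s₁, (f₂ y).card := Finset.card_biUnion_le
              _ ≤ ∑ _y ∈ s₁, 2^n₀ := Finset.sum_le_sum (fun y _ => (hf₂spec y).1)
              _ = s₁.card * 2^n₀ := by rw [Finset.sum_const, smul_eq_mul]
              _ ≤ 2^n₀ * 2^n₀ := Nat.mul_le_mul_right _ hs₁c
        _ = (2^n₀)^3 := by ring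
    · intro w hw
      obtain ⟨y₁, hy₁, hw₁⟩ := hs₁ w hw
      obtain ⟨y₂, hy₂, hw₂⟩ := (hf₂spec y₁).2 w hw₁
      have e2 : (2*γ)/2 = γ := by ring
      rw [e2] at hw₂
      obtain ⟨y₃, hy₃, hw₃⟩ := (hf₃spec y₂).2 w hw₂
      exact ⟨y₃, Finset.mem_biUnion.mpr ⟨y₂, Finset.mem_biUnion.mpr ⟨y₁, hy₁, hy₂⟩, hy₃⟩, hw₃⟩
  obtain ⟨s, hsc, hscov⟩ := key
  -- each w ∈ S lies in some small ball; injectively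
  have hchoice : ∀ w ∈ S, ∃ y ∈ s, x w ∈ Metric.ball y (γ/2) := by
    intro w hw
    exact hscov (x w) (Metric.mem_ball.mpr (hin w hw))
  set F : Fin k → X := fun w => if h : w ∈ S then (hchoice w h).choose else a with hF
  have hFmem : ∀ w ∈ S, F w ∈ s ∧ x w ∈ Metric.ball (F w) (γ/2) := by
    intro w hw
    rw [hF]; simp only [dif_pos hw]
    exact ⟨(hchoice w hw).choose_spec.1, (hchoice w hw).choose_spec.2⟩
  have hinj : ∀ w ∈ S, ∀ w' ∈ S, F w = F w' → w = w' := by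
    intro w hw w' hw' heq
    by_contra hne
    have h1 := (hFmem w hw).2
    have h2 := (hFmem w' hw').2
    rw [Metric.mem_ball] at h1 h2
    have : dist (x w) (x w') < γ := by
      have htri := dist_triangle (x w) (F w) (x w')
      rw [heq] at h1
      have h2' : dist (F w') (x w') < γ/2 := by rwa [dist_comm] at h2
      rw [heq] at htri
      linarith
    exact absurd this (not_lt.mpr (le_of_lt (hsep w hw w' hw' hne)))
  calc S.card ≤ s.card := Finset.card_le_card_of_injOn F (fun w hw => (hFmem w hw).1) hinj
    _ ≤ (2^n₀)^3 := hsc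





section Scheme

variable {X : Type} [MetricSpace X] {k : ℕ}

/-- index of (a) nearest point among `y 0, ..., y (k-1)` to `z` -/
noncomputable def nn (hk : 0 < k) (y : Fin k → X) (z : X) : Fin k :=
  (Finset.exists_min_image univ (fun j => dist z (y j)) ⟨⟨0, hk⟩, mem_univ _⟩).choose

lemma nn_spec (hk : 0 < k) (y : Fin k → X) (z : X) :
    ∀ j, dist z (y (nn hk y z)) ≤ dist z (y j) := by
  intro j
  have h := (Finset.exists_min_image univ (fun j => dist z (y j)) ⟨⟨0, hk⟩, mem_univ _⟩).choose_spec
  exact h.2 j (mem_univ _)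

/-- distance from `z` to the nearest label -/
noncomputable def gpt (hk : 0 < k) (y : Fin k → X) (z : X) : ℝ := dist z (y (nn hk y z))

lemma gpt_nonneg (hk : 0 < k) (y : Fin k → X) (z : X) : 0 ≤ gpt hk y z := dist_nonneg

lemma gpt_le (hk : 0 < k) (y : Fin k → X) (z : X) (j : Fin k) :
    gpt hk y z ≤ dist z (y j) := nn_spec hk y z j

lemma gpt_lip (hk : 0 < k) (y : Fin k → X) (z z' : X) :
    gpt hk y z ≤ dist z z' + gpt hk y z' := by
  calc gpt hk y z ≤ dist z (y (nn hk y z')) := gpt_le hk y z _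
    _ ≤ dist z z' + dist z' (y (nn hk y z')) := dist_triangle _ _ _
    _ = dist z z' + gpt hk y z' := rfl

variable (hk : 0 < k) (x y : Fin k → X) (Ns : ℕ)

/-- the `g` value of a vertex -/
noncomputable def gv (i : Fin k) : ℝ := gpt hk y (x i)

/-- shifted scale class -/
noncomputable def cls (b : Fin Ns) (i : Fin k) : ℤ :=
  ⌊Real.logb 2 (gv hk x y i) - (b : ℝ)/Ns⌋

/-- scale length -/
noncomputable def γr (b : Fin Ns) (t : ℤ) : ℝ := (2:ℝ) ^ ((t : ℝ) + (b : ℝ)/Ns)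

/-- vertices of a given class -/
noncomputable def Vt (b : Fin Ns) (t : ℤ) : Finset (Fin k) :=
  univ.filter (fun i => 0 < gv hk x y i ∧ cls hk x y Ns b i = t)

/-- net at a given scale -/
noncomputable def netF (b : Fin Ns) (t : ℤ) : Finset (Fin k) :=
  gnet x (γr Ns b t) (Vt hk x y Ns b t)

/-- the random radius -/
noncomputable def Rrad (b : Fin Ns) (t : ℤ) (r : Fin Ns) : ℝ :=
  γr Ns b t * (1 + ((r : ℝ) + 1)/Ns)

/-- candidate net points -/
noncomputable def cand (b : Fin Ns) (t : ℤ) (r : Fin Ns) (z : X) : Finset (Fin k) :=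
  (netF hk x y Ns b t).filter (fun w => dist z (x w) ≤ Rrad Ns b t r)

/-- pick the candidate with minimal priority -/
noncomputable def pick (π : Equiv.Perm (Fin k)) (c : Finset (Fin k)) (dflt : Fin k) : Fin k :=
  if h : c.Nonempty then π.symm ((c.image π).min' (h.image π)) else dflt

lemma pick_mem (π : Equiv.Perm (Fin k)) (c : Finset (Fin k)) (dflt : Fin k) (h : c.Nonempty) :
    pick π c dflt ∈ c ∧ ∀ w' ∈ c, π (pick π c dflt) ≤ π w' := by
  rw [pick, dif_pos h]
  have hmem := (c.image π).min'_mem (h.image π)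
  obtain ⟨w, hw, hweq⟩ := Finset.mem_image.mp hmem
  constructor
  · rw [← hweq, Equiv.symm_apply_apply]; exact hw
  · intro w' hw'
    rw [Equiv.apply_symm_apply]
    exact (c.image π).min'_le _ (Finset.mem_image_of_mem π hw')

/-- the grabber of vertex `i` (net point whose cluster contains `x i`) -/
noncomputable def grab (ω : Fin Ns × Fin Ns × Equiv.Perm (Fin k)) (i : Fin k) : Fin k :=
  if 0 < gv hk x y i then
    pick ω.2.2 (cand hk x y Ns ω.1 (cls hk x y Ns ω.1 i) ω.2.1 (x i)) i
  else i

/-- the final assignment (as an index into `y`) -/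
noncomputable def cfun (ω : Fin Ns × Fin Ns × Equiv.Perm (Fin k)) (i : Fin k) : Fin k :=
  nn hk y (x (grab hk x y Ns ω i))

end Scheme





section SchemeLemmas

variable {X : Type} [MetricSpace X] {k : ℕ}
variable (hk : 0 < k) (x y : Fin k → X) {Ns : ℕ}

lemma γr_pos (b : Fin Ns) (t : ℤ) : 0 < γr Ns b t := Real.rpow_pos_of_pos (by norm_num) _

lemma scale_le (b : Fin Ns) {i : Fin k} (hi : 0 < gv hk x y i) :
    γr Ns b (cls hk x y Ns b i) ≤ gv hk x y i ∧
      gv hk x y i < 2 * γr Ns b (cls hk x y Ns b i) := by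
  set L := Real.logb 2 (gv hk x y i) with hL
  set θ := (b : ℝ)/Ns with hθ
  set t := cls hk x y Ns b i with ht
  have htL : (t : ℝ) ≤ L - θ := by rw [ht, cls]; exact Int.floor_le _
  have htL2 : L - θ < (t : ℝ) + 1 := by rw [ht, cls]; exact Int.lt_floor_add_one _
  have hg : (2:ℝ) ^ L = gv hk x y i := Real.rpow_logb (by norm_num) (by norm_num) hi
  constructor
  · rw [γr, ← hθ, ← hg]
    exact Real.rpow_le_rpow_of_exponent_le (by norm_num) (by linarith)
  · have : gv hk x y i < (2:ℝ) ^ (((t:ℝ) + θ) + 1) := by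
      rw [← hg]
      exact Real.rpow_lt_rpow_of_exponent_lt (by norm_num) (by linarith)
    rw [Real.rpow_add (by norm_num), Real.rpow_one] at this
    rw [γr, ← hθ]
    linarith
  
lemma mem_Vt {b : Fin Ns} {i : Fin k} (hi : 0 < gv hk x y i) :
    i ∈ Vt hk x y Ns b (cls hk x y Ns b i) :=
  Finset.mem_filter.mpr ⟨mem_univ _, hi, rfl⟩

lemma netF_sub (b : Fin Ns) (t : ℤ) : netF hk x y Ns b t ⊆ Vt hk x y Ns b t :=
  (gnet_props x (γr Ns b t) (Vt hk x y Ns b t)).1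

lemma netF_sep (b : Fin Ns) (t : ℤ) :
    ∀ w ∈ netF hk x y Ns b t, ∀ w' ∈ netF hk x y Ns b t, w ≠ w' →
      γr Ns b t < dist (x w) (x w') :=
  (gnet_props x (γr Ns b t) (Vt hk x y Ns b t)).2.1

lemma mem_Vt_props {b : Fin Ns} {t : ℤ} {w : Fin k} (hw : w ∈ Vt hk x y Ns b t) :
    0 < gv hk x y w ∧ gv hk x y w < 2 * γr Ns b t := by
  obtain ⟨-, h1, h2⟩ := Finset.mem_filter.mp hw
  refine ⟨h1, ?_⟩
  have := (scale_le hk x y b h1).2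
  rwa [h2] at this

lemma γr_le_Rrad (hNs : 0 < Ns) (b : Fin Ns) (t : ℤ) (r : Fin Ns) :
    γr Ns b t ≤ Rrad Ns b t r := by
  rw [Rrad]
  have h1 : (0:ℝ) ≤ ((r : ℝ) + 1)/Ns := by positivity
  nlinarith [γr_pos (Ns := Ns) b t]

lemma Rrad_le (b : Fin Ns) (t : ℤ) (r : Fin Ns) : Rrad Ns b t r ≤ 2 * γr Ns b t := by
  rw [Rrad]
  have h2 : ((r : ℝ) + 1)/Ns ≤ 1 := by
    rcases Nat.eq_zero_or_pos Ns with h | h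
    · exact absurd (r.2) (by omega)
    · rw [div_le_one (by exact_mod_cast h)]
      have : (r : ℕ) < Ns := r.2
      push_cast
      exact_mod_cast Nat.succ_le_of_lt this
  nlinarith [γr_pos (Ns := Ns) b t]

lemma cand_nonempty (hNs : 0 < Ns) (b r : Fin Ns) {i : Fin k} (hi : 0 < gv hk x y i) :
    (cand hk x y Ns b (cls hk x y Ns b i) r (x i)).Nonempty := by
  obtain ⟨w, hw, hd⟩ := (gnet_props x (γr Ns b (cls hk x y Ns b i))
      (Vt hk x y Ns b (cls hk x y Ns b i))).2.2
    (le_of_lt (γr_pos _ _)) i (mem_Vt hk x y hi)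
  exact ⟨w, Finset.mem_filter.mpr ⟨hw, hd.trans (γr_le_Rrad hNs b _ r)⟩⟩

lemma grab_spec (hNs : 0 < Ns) (b r : Fin Ns) (π : Equiv.Perm (Fin k)) {i : Fin k}
    (hi : 0 < gv hk x y i) :
    grab hk x y Ns (b, r, π) i ∈ cand hk x y Ns b (cls hk x y Ns b i) r (x i) ∧
      ∀ w' ∈ cand hk x y Ns b (cls hk x y Ns b i) r (x i),
        π (grab hk x y Ns (b, r, π) i) ≤ π w' := by
  rw [grab, if_pos hi]
  exact pick_mem π _ i (cand_nonempty hk x y hNs b r hi)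

lemma move_le (hNs : 0 < Ns) (ω : Fin Ns × Fin Ns × Equiv.Perm (Fin k)) (i : Fin k) :
    dist (x i) (y (cfun hk x y Ns ω i)) ≤ 4 * gv hk x y i := by
  obtain ⟨b, r, π⟩ := ω
  by_cases hi : 0 < gv hk x y i
  · set w := grab hk x y Ns (b, r, π) i with hw
    have hspec := (grab_spec hk x y hNs b r π hi).1
    obtain ⟨hwnet, hwd⟩ := Finset.mem_filter.mp hspec
    have hd1 : dist (x i) (x w) ≤ 2 * γr Ns b (cls hk x y Ns b i) :=
      hwd.trans (Rrad_le b _ r)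
    have hwV := netF_sub hk x y b _ hwnet
    have hgw := (mem_Vt_props hk x y hwV).2
    have hγg := (scale_le hk x y b hi).1
    calc dist (x i) (y (cfun hk x y Ns (b, r, π) i))
        ≤ dist (x i) (x w) + dist (x w) (y (cfun hk x y Ns (b, r, π) i)) := dist_triangle _ _ _
      _ = dist (x i) (x w) + gpt hk y (x w) := by rw [cfun]; rfl
      _ ≤ 2 * γr Ns b (cls hk x y Ns b i) + gv hk x y w := by
          rw [gv] at hgw ⊢; exact add_le_add hd1 (le_refl _)
      _ ≤ 4 * γr Ns b (cls hk x y Ns b i) := by linarith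
      _ ≤ 4 * gv hk x y i := by linarith
  · have hgrab : grab hk x y Ns (b, r, π) i = i := by rw [grab, if_neg hi]
    have h0 : gv hk x y i = 0 := le_antisymm (not_lt.mp hi) (gpt_nonneg hk y (x i))
    rw [cfun, hgrab]
    have : dist (x i) (y (nn hk y (x i))) = gv hk x y i := rfl
    rw [this, h0]
    linarith [gpt_nonneg hk y (x i)]

lemma W_le (hNs : 0 < Ns) (ω : Fin Ns × Fin Ns × Equiv.Perm (Fin k)) (i j : Fin k) :
    dist (y (cfun hk x y Ns ω i)) (y (cfun hk x y Ns ω j))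
      ≤ 4 * gv hk x y i + dist (x i) (x j) + 4 * gv hk x y j := by
  have h1 := move_le hk x y hNs ω i
  have h2 := move_le hk x y hNs ω j
  calc dist (y (cfun hk x y Ns ω i)) (y (cfun hk x y Ns ω j))
      ≤ dist (y (cfun hk x y Ns ω i)) (x i) + dist (x i) (y (cfun hk x y Ns ω j)) :=
        dist_triangle _ _ _
    _ ≤ dist (y (cfun hk x y Ns ω i)) (x i) + (dist (x i) (x j) + dist (x j) (y (cfun hk x y Ns ω j))) := by
        linarith [dist_triangle (x i) (x j) (y (cfun hk x y Ns ω j))]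
    _ ≤ 4 * gv hk x y i + dist (x i) (x j) + 4 * gv hk x y j := by
        rw [dist_comm (y (cfun hk x y Ns ω i)) (x i)]
        linarith

lemma W_zero (ω : Fin Ns × Fin Ns × Equiv.Perm (Fin k)) {i j : Fin k}
    (h : grab hk x y Ns ω i = grab hk x y Ns ω j) :
    dist (y (cfun hk x y Ns ω i)) (y (cfun hk x y Ns ω j)) = 0 := by
  rw [cfun, cfun, h, dist_self]

lemma gv_lip (i j : Fin k) : gv hk x y i ≤ dist (x i) (x j) + gv hk x y j :=
  gpt_lip hk y (x i) (x j)

end SchemeLemmas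





section CutCount

variable {X : Type} [MetricSpace X] {k : ℕ}
variable (hk : 0 < k) (x y : Fin k → X) {Ns : ℕ}

/-- The key CKR-style cut probability bound (counting form). -/
lemma cut_count (hNs : 0 < Ns) (b : Fin Ns) (i j : Fin k)
    (hi : 0 < gv hk x y i) (hj : 0 < gv hk x y j)
    (hcls : cls hk x y Ns b i = cls hk x y Ns b j)
    (hD : dist (x i) (x j) < γr Ns b (cls hk x y Ns b i) / 2)
    (n₀ : ℕ)
    (hcov : ∀ (z : X) (R : ℝ), ∃ s : Finset X, s.card ≤ 2^n₀ ∧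
      ∀ w ∈ Metric.ball z R, ∃ yy ∈ s, w ∈ Metric.ball yy (R/2)) :
    (((univ : Finset (Fin Ns × Equiv.Perm (Fin k))).filter
        (fun rπ => grab hk x y Ns (b, rπ.1, rπ.2) i ≠ grab hk x y Ns (b, rπ.1, rπ.2) j)).card : ℝ)
      ≤ (dist (x i) (x j) * Ns / γr Ns b (cls hk x y Ns b i) + 1) * (Nat.factorial k)
          * harm ((2^n₀)^3) := by
  classical
  set t := cls hk x y Ns b i with ht
  set γ := γr Ns b t with hγdef
  have hγ : 0 < γ := γr_pos b t
  have hNs' : (0:ℝ) < Ns := by exact_mod_cast hNs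
  set D := dist (x i) (x j) with hDdef
  have hD0 : 0 ≤ D := dist_nonneg
  set α : Fin k → ℝ := fun w => min (dist (x i) (x w)) (dist (x j) (x w)) with hα
  set C2 : Finset (Fin k) := (netF hk x y Ns b t).filter (fun w => α w ≤ 2*γ) with hC2
  set Sw : Fin k → Finset (Fin k) := fun w => C2.filter (fun w' => α w' ≤ α w) with hSw
  set Rset : Fin k → Finset (Fin Ns) :=
    fun w => univ.filter (fun r : Fin Ns => α w ≤ Rrad Ns b t r ∧ Rrad Ns b t r ≤ α w + D) with hRset
  set Pset : Fin k → Finset (Equiv.Perm (Fin k)) :=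
    fun w => univ.filter (fun π => ∀ w' ∈ Sw w, w' ≠ w → π w < π w') with hPset
  -- Step 1: inclusion into the union of rectangles
  have hincl : ((univ : Finset (Fin Ns × Equiv.Perm (Fin k))).filter
        (fun rπ => grab hk x y Ns (b, rπ.1, rπ.2) i ≠ grab hk x y Ns (b, rπ.1, rπ.2) j))
      ⊆ C2.biUnion (fun w => Rset w ×ˢ Pset w) := by
    rintro ⟨r, π⟩ hp
    have hne : grab hk x y Ns (b, r, π) i ≠ grab hk x y Ns (b, r, π) j :=
      (Finset.mem_filter.mp hp).2
    set wi := grab hk x y Ns (b, r, π) i with hwi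
    set wj := grab hk x y Ns (b, r, π) j with hwj
    have hspeci := grab_spec hk x y hNs b r π hi
    have hspecj := grab_spec hk x y hNs b r π hj
    rw [← hcls] at hspecj
    obtain ⟨hwic, hwimin⟩ := hspeci
    obtain ⟨hwjc, hwjmin⟩ := hspecj
    have hwiN := (Finset.mem_filter.mp hwic).1
    have hwjN := (Finset.mem_filter.mp hwjc).1
    have hwiR : dist (x i) (x wi) ≤ Rrad Ns b t r := (Finset.mem_filter.mp hwic).2
    have hwjR : dist (x j) (x wj) ≤ Rrad Ns b t r := (Finset.mem_filter.mp hwjc).2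
    have hRγ2 : Rrad Ns b t r ≤ 2*γ := Rrad_le b t r
    have hππ : π wi ≠ π wj := fun h => hne (π.injective h)
    rcases lt_or_gt_of_ne hππ with hlt | hgt
    · -- witness wi
      have hjfar : ¬ dist (x j) (x wi) ≤ Rrad Ns b t r := by
        intro hcon
        have : wi ∈ cand hk x y Ns b t r (x j) := Finset.mem_filter.mpr ⟨hwiN, hcon⟩
        exact absurd (hwjmin wi this) (not_le.mpr hlt)
      have hαwi : α wi = dist (x i) (x wi) := by
        rw [hα]; exact min_eq_left (le_of_lt (lt_of_le_of_lt hwiR (not_le.mp hjfar)))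
      refine Finset.mem_biUnion.mpr ⟨wi, ?_, ?_⟩
      · refine Finset.mem_filter.mpr ⟨hwiN, ?_⟩
        rw [hαwi]; exact hwiR.trans hRγ2
      · rw [Finset.mem_product]
        constructor
        · refine Finset.mem_filter.mpr ⟨mem_univ _, ?_, ?_⟩
          · rw [hαwi]; exact hwiR
          · have h1 : Rrad Ns b t r < dist (x j) (x wi) := not_le.mp hjfar
            have h2 : dist (x j) (x wi) ≤ dist (x j) (x i) + dist (x i) (x wi) :=
              dist_triangle _ _ _
            rw [dist_comm (x j) (x i)] at h2
            rw [hαwi]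
            rw [hDdef]
            linarith
        · refine Finset.mem_filter.mpr ⟨mem_univ _, ?_⟩
          intro w' hw' hnew
          have hw'C2 := (Finset.mem_filter.mp hw').1
          have hw'α : α w' ≤ α wi := (Finset.mem_filter.mp hw').2
          have hw'N := (Finset.mem_filter.mp hw'C2).1
          have hw'R : α w' ≤ Rrad Ns b t r := hw'α.trans (by rw [hαwi]; exact hwiR)
          rcases min_le_iff.mp (le_of_eq_of_le (by rw [hα]) hw'R) with hci | hcj
          · have : w' ∈ cand hk x y Ns b t r (x i) := Finset.mem_filter.mpr ⟨hw'N, hci⟩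
            exact lt_of_le_of_ne (hwimin w' this) (fun h => hnew (π.injective h.symm))
          · have : w' ∈ cand hk x y Ns b t r (x j) := Finset.mem_filter.mpr ⟨hw'N, hcj⟩
            exact lt_of_lt_of_le hlt (hwjmin w' this)
    · -- witness wj (symmetric)
      have hifar : ¬ dist (x i) (x wj) ≤ Rrad Ns b t r := by
        intro hcon
        have : wj ∈ cand hk x y Ns b t r (x i) := Finset.mem_filter.mpr ⟨hwjN, hcon⟩
        exact absurd (hwimin wj this) (not_le.mpr hgt)
      have hαwj : α wj = dist (x j) (x wj) := by
        rw [hα]; exact min_eq_right (le_of_lt (lt_of_le_of_lt hwjR (not_le.mp hifar)))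
      refine Finset.mem_biUnion.mpr ⟨wj, ?_, ?_⟩
      · refine Finset.mem_filter.mpr ⟨hwjN, ?_⟩
        rw [hαwj]; exact hwjR.trans hRγ2
      · rw [Finset.mem_product]
        constructor
        · refine Finset.mem_filter.mpr ⟨mem_univ _, ?_, ?_⟩
          · rw [hαwj]; exact hwjR
          · have h1 : Rrad Ns b t r < dist (x i) (x wj) := not_le.mp hifar
            have h2 : dist (x i) (x wj) ≤ dist (x i) (x j) + dist (x j) (x wj) :=
              dist_triangle _ _ _
            rw [hαwj]
            rw [hDdef]
            linarith
        · refine Finset.mem_filter.mpr ⟨mem_univ _, ?_⟩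
          intro w' hw' hnew
          have hw'C2 := (Finset.mem_filter.mp hw').1
          have hw'α : α w' ≤ α wj := (Finset.mem_filter.mp hw').2
          have hw'N := (Finset.mem_filter.mp hw'C2).1
          have hw'R : α w' ≤ Rrad Ns b t r := hw'α.trans (by rw [hαwj]; exact hwjR)
          rcases min_le_iff.mp (le_of_eq_of_le (by rw [hα]) hw'R) with hci | hcj
          · have : w' ∈ cand hk x y Ns b t r (x i) := Finset.mem_filter.mpr ⟨hw'N, hci⟩
            exact lt_of_lt_of_le hgt (hwimin w' this)
          · have : w' ∈ cand hk x y Ns b t r (x j) := Finset.mem_filter.mpr ⟨hw'N, hcj⟩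
            exact lt_of_le_of_ne (hwjmin w' this) (fun h => hnew (π.injective h.symm))
  -- Step 2: cardinality bounds
  have hcard1 : ((univ : Finset (Fin Ns × Equiv.Perm (Fin k))).filter
        (fun rπ => grab hk x y Ns (b, rπ.1, rπ.2) i ≠ grab hk x y Ns (b, rπ.1, rπ.2) j)).card
      ≤ ∑ w ∈ C2, (Rset w).card * (Pset w).card := by
    calc _ ≤ (C2.biUnion (fun w => Rset w ×ˢ Pset w)).card := Finset.card_le_card hincl
      _ ≤ ∑ w ∈ C2, (Rset w ×ˢ Pset w).card := Finset.card_biUnion_le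
      _ = ∑ w ∈ C2, (Rset w).card * (Pset w).card := by
          apply Finset.sum_congr rfl; intro w _; exact Finset.card_product _ _
  -- bound each rectangle
  have hrect : ∀ w ∈ C2, ((Rset w).card : ℝ) * ((Pset w).card : ℝ)
      ≤ (D * Ns / γ + 1) * ((Nat.factorial k : ℝ) / ((Sw w).card : ℝ)) := by
    intro w hwC2
    have hwSw : w ∈ Sw w := Finset.mem_filter.mpr ⟨hwC2, le_refl _⟩
    have hsw0 : 0 < ((Sw w).card : ℝ) := by
      have : 0 < (Sw w).card := Finset.card_pos.mpr ⟨w, hwSw⟩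
      exact_mod_cast this
    -- radius count
    have hRcount : ((Rset w).card : ℝ) ≤ D * Ns / γ + 1 := by
      have hsub : Rset w ⊆ univ.filter (fun r : Fin Ns =>
          (α w - γ)*Ns/γ - 1 ≤ (r:ℝ) ∧ (r:ℝ) ≤ ((α w - γ)*Ns/γ - 1) + D*Ns/γ) := by
        intro r hr
        obtain ⟨-, h1, h2⟩ := Finset.mem_filter.mp hr
        rw [Rrad] at h1 h2
        rw [← hγdef] at h1 h2
        refine Finset.mem_filter.mpr ⟨mem_univ _, ?_, ?_⟩
        · rw [sub_le_iff_le_add, div_le_iff₀ hγ]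
          have := mul_le_mul_of_nonneg_right h1 (le_of_lt hNs')
          have hexp : γ * (1 + ((r:ℝ) + 1)/Ns) * Ns = γ*Ns + γ*((r:ℝ)+1) := by
            field_simp
          rw [hexp] at this
          nlinarith
        · have hexp : γ * (1 + ((r:ℝ) + 1)/Ns) * Ns = γ*Ns + γ*((r:ℝ)+1) := by
            field_simp
          have hmul := mul_le_mul_of_nonneg_right h2 (le_of_lt hNs')
          rw [hexp] at hmul
          have hgoal : (r:ℝ) + 1 ≤ ((α w - γ)*Ns + D*Ns)/γ := by
            rw [le_div_iff₀ hγ]; nlinarith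
          have hsplit : ((α w - γ)*Ns + D*Ns)/γ = (α w - γ)*Ns/γ + D*Ns/γ := add_div _ _ _
          rw [hsplit] at hgoal
          linarith
      calc ((Rset w).card : ℝ) ≤ _ := by
            exact_mod_cast Nat.cast_le.mpr (Finset.card_le_card hsub)
        _ ≤ D*Ns/γ + 1 := card_fin_interval_le _ _ (by positivity)
    -- permutation count
    have hPcount : ((Pset w).card : ℝ) ≤ (Nat.factorial k : ℝ) / ((Sw w).card : ℝ) := by
      rw [le_div_iff₀ hsw0]
      have := perm_min_count (Sw w) w hwSw
      exact_mod_cast this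
    have hR0 : (0:ℝ) ≤ ((Rset w).card : ℝ) := Nat.cast_nonneg _
    have hP0 : (0:ℝ) ≤ (Nat.factorial k : ℝ) / ((Sw w).card : ℝ) := by positivity
    exact mul_le_mul hRcount hPcount (Nat.cast_nonneg _) (by positivity)
  -- packing bound on C2
  have hpack : C2.card ≤ (2^n₀)^3 := by
    apply packing x n₀ hcov (x i) γ hγ C2
    · intro w hw w' hw' hne
      exact netF_sep hk x y b t w (Finset.mem_filter.mp hw).1 w' (Finset.mem_filter.mp hw').1 hne
    · intro w hw
      have hαw : α w ≤ 2*γ := (Finset.mem_filter.mp hw).2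
      rcases min_le_iff.mp (le_of_eq_of_le (by rw [hα]) hαw) with hci | hcj
      · rw [dist_comm]; linarith
      · have h3 := dist_triangle (x w) (x j) (x i)
        rw [dist_comm (x w) (x j)] at h3
        have h4 : dist (x j) (x i) = D := by rw [hDdef, dist_comm]
        rw [h4] at h3
        linarith
  -- assemble
  have hsum : ∑ w ∈ C2, ((Rset w).card : ℝ) * ((Pset w).card : ℝ)
      ≤ (D * Ns / γ + 1) * (Nat.factorial k : ℝ) * harm ((2^n₀)^3) := by
    calc ∑ w ∈ C2, ((Rset w).card : ℝ) * ((Pset w).card : ℝ)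
        ≤ ∑ w ∈ C2, (D * Ns / γ + 1) * ((Nat.factorial k : ℝ) / ((Sw w).card : ℝ)) :=
          Finset.sum_le_sum hrect
      _ = (D * Ns / γ + 1) * (Nat.factorial k : ℝ) * ∑ w ∈ C2, 1/((Sw w).card : ℝ) := by
          rw [Finset.mul_sum]
          apply Finset.sum_congr rfl
          intro w _
          ring
      _ ≤ (D * Ns / γ + 1) * (Nat.factorial k : ℝ) * harm C2.card := by
          apply mul_le_mul_of_nonneg_left
          · exact sum_inv_rank_le C2 α
          · positivity
      _ ≤ (D * Ns / γ + 1) * (Nat.factorial k : ℝ) * harm ((2^n₀)^3) := by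
          apply mul_le_mul_of_nonneg_left (harm_mono hpack) (by positivity)
  calc (((univ : Finset (Fin Ns × Equiv.Perm (Fin k))).filter
        (fun rπ => grab hk x y Ns (b, rπ.1, rπ.2) i ≠ grab hk x y Ns (b, rπ.1, rπ.2) j)).card : ℝ)
      ≤ (∑ w ∈ C2, (Rset w).card * (Pset w).card : ℕ) := by exact_mod_cast hcard1
    _ = ∑ w ∈ C2, ((Rset w).card : ℝ) * ((Pset w).card : ℝ) := by push_cast; rfl
    _ ≤ _ := hsum

end CutCount





lemma int_Icc_card_le (u v : ℝ) (huv : u ≤ v) :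
    ((Finset.Icc (⌊u⌋+1) ⌊v⌋).card : ℝ) ≤ v - u + 1 := by
  rw [Int.card_Icc]
  have he : ⌊v⌋ + 1 - (⌊u⌋ + 1) = ⌊v⌋ - ⌊u⌋ := by ring
  rw [he]
  rcases le_or_gt ⌊u⌋ ⌊v⌋ with h | h
  · have h1 : ((⌊v⌋ - ⌊u⌋).toNat : ℤ) = ⌊v⌋ - ⌊u⌋ := Int.toNat_of_nonneg (by omega)
    have h2 : ((⌊v⌋ - ⌊u⌋).toNat : ℝ) = (⌊v⌋ : ℝ) - (⌊u⌋ : ℝ) := by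
      exact_mod_cast congrArg (fun z : ℤ => (z : ℝ)) h1
    rw [h2]
    have h3 : (⌊v⌋ : ℝ) ≤ v := Int.floor_le _
    have h4 : u - 1 < (⌊u⌋ : ℝ) := Int.sub_one_lt_floor _
    linarith
  · have : (⌊v⌋ - ⌊u⌋).toNat = 0 := by omega
    rw [this]
    push_cast
    linarith

section EdgeBound

variable {X : Type} [MetricSpace X] {k : ℕ}
variable (hk : 0 < k) (x y : Fin k → X) {Ns : ℕ}

/-- counting the scale shifts for which two vertices land in different classes -/
lemma class_diff_count (hNs : 0 < Ns) (i j : Fin k)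
    (hi : 0 < gv hk x y i) (hgij : gv hk x y i ≤ gv hk x y j) :
    (((univ : Finset (Fin Ns)).filter
        (fun b => cls hk x y Ns b i ≠ cls hk x y Ns b j)).card : ℝ)
      ≤ (Ns : ℝ) * ((3/2) * (dist (x i) (x j) / gv hk x y i)) + 1 := by
  classical
  have hj : 0 < gv hk x y j := lt_of_lt_of_le hi hgij
  set A := gv hk x y i with hA
  set B := gv hk x y j with hB
  set D := dist (x i) (x j) with hD
  set Li := Real.logb 2 A with hLi
  set Lj := Real.logb 2 B with hLj
  have hNs' : (0:ℝ) < Ns := by exact_mod_cast hNs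
  have hLij : Li ≤ Lj := Real.logb_le_logb_of_le (by norm_num : (1:ℝ) < 2) hi hgij
  -- log difference bound
  have hlogd : Lj - Li ≤ (3/2) * (D / A) := by
    have hlog2 : (0.6931471803 : ℝ) < Real.log 2 := Real.log_two_gt_d9
    have h1 : Lj - Li = Real.log (B/A) / Real.log 2 := by
      rw [hLi, hLj, Real.logb, Real.logb, div_sub_div_same,
        Real.log_div (ne_of_gt hj) (ne_of_gt hi)]
    have h2 : Real.log (B/A) ≤ B/A - 1 := Real.log_le_sub_one_of_pos (by positivity)
    have h3 : B/A - 1 = (B - A)/A := by field_simp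
    have h4 : B - A ≤ D := by
      have := gv_lip hk x y j i
      rw [← hA, ← hB, dist_comm, ← hD] at this
      linarith
    have h5 : (B - A)/A ≤ D/A := (div_le_div_iff_of_pos_right hi).mpr h4
    have h6 : Real.log (B/A) ≤ D/A := by rw [h3] at h2; linarith
    rw [h1]
    rw [div_le_iff₀ (by linarith : (0:ℝ) < Real.log 2)]
    have h7 : (0:ℝ) ≤ D/A := by positivity
    nlinarith
  -- injection into an integer interval
  set mb : Fin Ns → ℤ := fun b => ⌊Lj - (b:ℝ)/Ns⌋ * Ns + (b:ℤ) with hmb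
  have hmem : ∀ b ∈ ((univ : Finset (Fin Ns)).filter
      (fun b => cls hk x y Ns b i ≠ cls hk x y Ns b j)),
      mb b ∈ Finset.Icc (⌊(Ns:ℝ)*Li⌋+1) ⌊(Ns:ℝ)*Lj⌋ := by
    intro b hb
    have hbne := (Finset.mem_filter.mp hb).2
    set θ := (b:ℝ)/Ns with hθ
    have hclsi : cls hk x y Ns b i = ⌊Li - θ⌋ := rfl
    have hclsj : cls hk x y Ns b j = ⌊Lj - θ⌋ := rfl
    have hmono : ⌊Li - θ⌋ ≤ ⌊Lj - θ⌋ := Int.floor_le_floor (by linarith)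
    have hltf : ⌊Li - θ⌋ < ⌊Lj - θ⌋ := by
      rcases lt_or_eq_of_le hmono with h | h
      · exact h
      · exact absurd (hclsi.trans (h.trans hclsj.symm)) hbne
    set n := ⌊Lj - θ⌋ with hn
    have hlow : Li - θ < (n:ℝ) := by
      have := Int.floor_lt.mp hltf
      exact_mod_cast this
    have hhigh : (n:ℝ) ≤ Lj - θ := Int.floor_le _
    have hθNs : θ * Ns = (b:ℝ) := by rw [hθ]; field_simp
    rw [Finset.mem_Icc]
    constructor
    · rw [Int.add_one_le_iff, Int.floor_lt]
      have : (Ns:ℝ)*Li < (n:ℝ)*Ns + (b:ℝ) := by nlinarith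
      rw [hmb]
      push_cast
      linarith
    · rw [Int.le_floor]
      have : (n:ℝ)*Ns + (b:ℝ) ≤ (Ns:ℝ)*Lj := by nlinarith
      rw [hmb]
      push_cast
      linarith
  have hinj : ∀ b ∈ ((univ : Finset (Fin Ns)).filter
      (fun b => cls hk x y Ns b i ≠ cls hk x y Ns b j)),
      ∀ b' ∈ ((univ : Finset (Fin Ns)).filter
      (fun b => cls hk x y Ns b i ≠ cls hk x y Ns b j)),
      mb b = mb b' → b = b' := by
    intro b _ b' _ heq
    rw [hmb] at heq
    simp only at heq
    set n := ⌊Lj - (b:ℝ)/Ns⌋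
    set n' := ⌊Lj - (b':ℝ)/Ns⌋
    have h : (n - n') * (Ns:ℤ) = (b':ℤ) - (b:ℤ) := by linear_combination heq
    have hb1 : (0:ℤ) ≤ (b:ℤ) := by positivity
    have hb2 : (b:ℤ) < Ns := by exact_mod_cast b.2
    have hb3 : (0:ℤ) ≤ (b':ℤ) := by positivity
    have hb4 : (b':ℤ) < Ns := by exact_mod_cast b'.2
    have hnn : n = n' := by
      rcases lt_trichotomy n n' with hlt | he | hgt
      · exfalso
        have h1 : n - n' ≤ -1 := by omega
        have h2 : (n - n') * (Ns:ℤ) ≤ (-1) * Ns :=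
          mul_le_mul_of_nonneg_right h1 (by omega)
        omega
      · exact he
      · exfalso
        have h1 : 1 ≤ n - n' := by omega
        have h2 : (1:ℤ) * Ns ≤ (n - n') * Ns :=
          mul_le_mul_of_nonneg_right h1 (by omega)
        omega
    rw [hnn] at h
    have : (b:ℤ) = (b':ℤ) := by omega
    exact Fin.ext (by exact_mod_cast this)
  have hcard := Finset.card_le_card_of_injOn mb hmem hinj
  calc (((univ : Finset (Fin Ns)).filter
        (fun b => cls hk x y Ns b i ≠ cls hk x y Ns b j)).card : ℝ)
      ≤ ((Finset.Icc (⌊(Ns:ℝ)*Li⌋+1) ⌊(Ns:ℝ)*Lj⌋).card : ℝ) := by exact_mod_cast hcard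
    _ ≤ (Ns:ℝ)*Lj - (Ns:ℝ)*Li + 1 := int_Icc_card_le _ _ (by nlinarith)
    _ ≤ (Ns : ℝ) * ((3/2) * (D / A)) + 1 := by nlinarith

end EdgeBound





lemma edge_arith (δ A B D Nr F : ℝ) (hδ : 1 ≤ δ) (hA : 0 < A) (hAB : A ≤ B)
    (hBDA : B ≤ D + A) (hD4 : 4*D < A) (hD0 : 0 ≤ D) (hNr : 1 ≤ Nr) (hF : 1 ≤ F) :
    Nr*(102*δ*F*(D*Nr+A)) + (Nr*((3/2)*(D/A)) + 1)*(Nr*F*(9*B))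
      ≤ (Nr*Nr*F)*(500*δ*D + 500*δ*(A+B)/Nr) := by
  have hNr0 : (0:ℝ) < Nr := by linarith
  have hF0 : (0:ℝ) < F := by linarith
  have hB0 : (0:ℝ) < B := lt_of_lt_of_le hA hAB
  have hDA : (D/A)*B ≤ (5/4)*D := by
    have hBA : B/A ≤ 5/4 := by rw [div_le_iff₀ hA]; linarith
    calc (D/A)*B = D*(B/A) := by ring
      _ ≤ D*(5/4) := mul_le_mul_of_nonneg_left hBA hD0
      _ = (5/4)*D := by ring
  have hRHS : (Nr*Nr*F)*(500*δ*D + 500*δ*(A+B)/Nr)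
      = (Nr*Nr*F)*(500*δ*D) + Nr*F*(500*δ*(A+B)) := by
    field_simp
  have hLHS1 : Nr*(102*δ*F*(D*Nr+A)) = (Nr*Nr*F)*(102*δ*D) + Nr*F*(102*δ*A) := by ring
  have hLHS2 : (Nr*((3/2)*(D/A)) + 1)*(Nr*F*(9*B))
      = (Nr*Nr*F)*((27/2)*((D/A)*B)) + Nr*F*(9*B) := by ring
  have hP1 : (0:ℝ) ≤ Nr*Nr*F := by positivity
  have hP2 : (0:ℝ) ≤ Nr*F := by positivity
  have i1 : 102*δ*D + (27/2)*((5/4)*D) ≤ 500*δ*D := by nlinarith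
  have i2 : 102*δ*A + 9*B ≤ 500*δ*(A+B) := by nlinarith
  have j1 : (Nr*Nr*F)*((27/2)*((D/A)*B)) ≤ (Nr*Nr*F)*((27/2)*((5/4)*D)) := by
    apply mul_le_mul_of_nonneg_left _ hP1
    linarith
  have j2 : (Nr*Nr*F)*(102*δ*D) + (Nr*Nr*F)*((27/2)*((5/4)*D)) ≤ (Nr*Nr*F)*(500*δ*D) := by
    have := mul_le_mul_of_nonneg_left i1 hP1
    nlinarith
  have j3 : Nr*F*(102*δ*A) + Nr*F*(9*B) ≤ Nr*F*(500*δ*(A+B)) := by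
    have := mul_le_mul_of_nonneg_left i2 hP2
    nlinarith
  rw [hRHS, hLHS1, hLHS2]
  linarith

section EdgeBound2

variable {X : Type} [MetricSpace X] {k : ℕ}
variable (hk : 0 < k) (x y : Fin k → X) {Ns : ℕ}

lemma edge_bound (hNs : 0 < Ns) (δ : ℝ) (hδ : 1 ≤ δ) (n₀ : ℕ)
    (hcov : ∀ (z : X) (R : ℝ), ∃ s : Finset X, s.card ≤ 2^n₀ ∧
      ∀ w ∈ Metric.ball z R, ∃ yy ∈ s, w ∈ Metric.ball yy (R/2))
    (hharm : harm ((2^n₀)^3) ≤ 6*δ)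
    (i j : Fin k) (hg : gv hk x y i ≤ gv hk x y j) :
    ∑ ω : Fin Ns × Fin Ns × Equiv.Perm (Fin k),
        dist (y (cfun hk x y Ns ω i)) (y (cfun hk x y Ns ω j))
      ≤ ((Ns:ℝ) * Ns * (Nat.factorial k)) *
          (500*δ*dist (x i) (x j) + 500*δ*(gv hk x y i + gv hk x y j)/Ns) := by
  classical
  have hA0 : 0 ≤ gv hk x y i := gpt_nonneg hk y (x i)
  have hB0 : 0 ≤ gv hk x y j := gpt_nonneg hk y (x j)
  have hD0 : 0 ≤ dist (x i) (x j) := dist_nonneg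
  have hNr : (1:ℝ) ≤ (Ns:ℝ) := by exact_mod_cast hNs
  have hNr0 : (0:ℝ) < (Ns:ℝ) := by linarith
  have hF : (1:ℝ) ≤ (Nat.factorial k : ℝ) := by exact_mod_cast (Nat.factorial_pos k)
  have hcardΩ : (Fintype.card (Fin Ns × Fin Ns × Equiv.Perm (Fin k)) : ℝ)
      = (Ns:ℝ) * Ns * (Nat.factorial k) := by
    rw [Fintype.card_prod, Fintype.card_prod, Fintype.card_fin, Fintype.card_perm,
      Fintype.card_fin]
    push_cast
    ring
  rcases le_or_gt (gv hk x y j) (5 * dist (x i) (x j)) with hcase | hcase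
  · -- deterministic case : gv j ≤ 5 D
    have hpt : ∀ ω ∈ (univ : Finset (Fin Ns × Fin Ns × Equiv.Perm (Fin k))),
        dist (y (cfun hk x y Ns ω i)) (y (cfun hk x y Ns ω j)) ≤ 41 * dist (x i) (x j) := by
      intro ω _
      have h1 := W_le hk x y hNs ω i j
      linarith
    calc ∑ ω : Fin Ns × Fin Ns × Equiv.Perm (Fin k),
          dist (y (cfun hk x y Ns ω i)) (y (cfun hk x y Ns ω j))
        ≤ (univ : Finset (Fin Ns × Fin Ns × Equiv.Perm (Fin k))).card
            • (41 * dist (x i) (x j)) := Finset.sum_le_card_nsmul _ _ _ hpt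
      _ = (Fintype.card (Fin Ns × Fin Ns × Equiv.Perm (Fin k)) : ℝ)
            * (41 * dist (x i) (x j)) := by rw [card_univ, nsmul_eq_mul]
      _ = ((Ns:ℝ) * Ns * (Nat.factorial k)) * (41 * dist (x i) (x j)) := by rw [hcardΩ]
      _ ≤ _ := by
          apply mul_le_mul_of_nonneg_left _ (by positivity)
          have h1 : 41 * dist (x i) (x j) ≤ 500*δ*dist (x i) (x j) := by nlinarith
          have h2 : (0:ℝ) ≤ 500*δ*(gv hk x y i + gv hk x y j)/Ns := by positivity
          linarith
  · -- main probabilistic case : 5 D < gv j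
    have hBDA : gv hk x y j ≤ dist (x i) (x j) + gv hk x y i := by
      have := gv_lip hk x y j i
      rwa [dist_comm (x j) (x i)] at this
    have hA4 : 4 * dist (x i) (x j) < gv hk x y i := by linarith
    have hA0' : 0 < gv hk x y i := by linarith
    have hB0' : 0 < gv hk x y j := by linarith
    rw [Fintype.sum_prod_type]
    have hinner : ∀ b : Fin Ns,
        (∑ p : Fin Ns × Equiv.Perm (Fin k),
          dist (y (cfun hk x y Ns (b, p) i)) (y (cfun hk x y Ns (b, p) j)))
        ≤ if cls hk x y Ns b i = cls hk x y Ns b j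
          then 102*δ*(Nat.factorial k)*(dist (x i) (x j)*Ns + gv hk x y i)
          else (Ns:ℝ)*(Nat.factorial k)*(9*gv hk x y j) := by
      intro b
      by_cases hbc : cls hk x y Ns b i = cls hk x y Ns b j
      · rw [if_pos hbc]
        set γ := γr Ns b (cls hk x y Ns b i) with hγdef
        have hγ0 : 0 < γ := γr_pos b _
        have hsci := scale_le hk x y b hA0'
        have hscj := scale_le hk x y b hB0'
        rw [← hbc] at hscj
        rw [← hγdef] at hsci hscj
        have hγA : γ ≤ gv hk x y i := hsci.1
        have hB2γ : gv hk x y j < 2*γ := hscj.2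
        have hA2γ : gv hk x y i < 2*γ := hsci.2
        have hDγ : dist (x i) (x j) < γ/2 := by linarith
        have hcut := cut_count hk x y hNs b i j hA0' hB0' hbc hDγ n₀ hcov
        rw [← hγdef] at hcut
        set cutP := ((univ : Finset (Fin Ns × Equiv.Perm (Fin k))).filter
            (fun rπ => grab hk x y Ns (b, rπ.1, rπ.2) i ≠ grab hk x y Ns (b, rπ.1, rπ.2) j))
          with hcutP
        have hsplit := Finset.sum_filter_add_sum_filter_not
          (univ : Finset (Fin Ns × Equiv.Perm (Fin k)))
          (fun rπ => grab hk x y Ns (b, rπ.1, rπ.2) i ≠ grab hk x y Ns (b, rπ.1, rπ.2) j)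
          (fun p => dist (y (cfun hk x y Ns (b, p) i)) (y (cfun hk x y Ns (b, p) j)))
        have hzero : ∑ p ∈ ((univ : Finset (Fin Ns × Equiv.Perm (Fin k))).filter
            (fun rπ => ¬ (grab hk x y Ns (b, rπ.1, rπ.2) i ≠ grab hk x y Ns (b, rπ.1, rπ.2) j))),
            dist (y (cfun hk x y Ns (b, p) i)) (y (cfun hk x y Ns (b, p) j)) = 0 := by
          apply Finset.sum_eq_zero
          intro p hp
          have heq := not_not.mp (Finset.mem_filter.mp hp).2
          exact W_zero hk x y (b, p.1, p.2) heq
        have hcutbd : ∑ p ∈ cutP,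
            dist (y (cfun hk x y Ns (b, p) i)) (y (cfun hk x y Ns (b, p) j))
            ≤ cutP.card • (17*γ) := by
          apply Finset.sum_le_card_nsmul
          intro p _
          have h1 := W_le hk x y hNs (b, p.1, p.2) i j
          linarith
        have htotal : (∑ p : Fin Ns × Equiv.Perm (Fin k),
            dist (y (cfun hk x y Ns (b, p) i)) (y (cfun hk x y Ns (b, p) j)))
            ≤ (cutP.card : ℝ) * (17*γ) := by
          rw [← hsplit, hzero, add_zero, ← nsmul_eq_mul]
          exact hcutbd
        have hcard : (cutP.card : ℝ)
            ≤ (dist (x i) (x j) * Ns / γ + 1) * (Nat.factorial k) * (6*δ) := by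
          calc (cutP.card : ℝ)
              ≤ (dist (x i) (x j) * Ns / γ + 1) * (Nat.factorial k) * harm ((2^n₀)^3) := hcut
            _ ≤ _ := by
                apply mul_le_mul_of_nonneg_left hharm
                positivity
        have hfin : (dist (x i) (x j) * Ns / γ + 1) * (Nat.factorial k) * (6*δ) * (17*γ)
            = 102*δ*(Nat.factorial k)*(dist (x i) (x j)*Ns + γ) := by
          field_simp
          ring
        calc (∑ p : Fin Ns × Equiv.Perm (Fin k),
            dist (y (cfun hk x y Ns (b, p) i)) (y (cfun hk x y Ns (b, p) j)))
            ≤ (cutP.card : ℝ) * (17*γ) := htotal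
          _ ≤ (dist (x i) (x j) * Ns / γ + 1) * (Nat.factorial k) * (6*δ) * (17*γ) := by
              apply mul_le_mul_of_nonneg_right hcard (by positivity)
          _ = 102*δ*(Nat.factorial k)*(dist (x i) (x j)*Ns + γ) := hfin
          _ ≤ 102*δ*(Nat.factorial k)*(dist (x i) (x j)*Ns + gv hk x y i) := by
              apply mul_le_mul_of_nonneg_left _ (by positivity)
              linarith
      · rw [if_neg hbc]
        have hpt : ∀ p ∈ (univ : Finset (Fin Ns × Equiv.Perm (Fin k))),
            dist (y (cfun hk x y Ns (b, p) i)) (y (cfun hk x y Ns (b, p) j))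
              ≤ 9 * gv hk x y j := by
          intro p _
          have h1 := W_le hk x y hNs (b, p.1, p.2) i j
          linarith
        calc (∑ p : Fin Ns × Equiv.Perm (Fin k),
            dist (y (cfun hk x y Ns (b, p) i)) (y (cfun hk x y Ns (b, p) j)))
            ≤ (univ : Finset (Fin Ns × Equiv.Perm (Fin k))).card • (9 * gv hk x y j) :=
              Finset.sum_le_card_nsmul _ _ _ hpt
          _ = (Fintype.card (Fin Ns × Equiv.Perm (Fin k)) : ℝ) * (9 * gv hk x y j) := by
              rw [card_univ, nsmul_eq_mul]
          _ = (Ns:ℝ)*(Nat.factorial k)*(9*gv hk x y j) := by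
              rw [Fintype.card_prod, Fintype.card_fin, Fintype.card_perm, Fintype.card_fin]
              push_cast
              ring
    -- sum the per-b bounds
    have hbsum : (∑ b : Fin Ns, ∑ p : Fin Ns × Equiv.Perm (Fin k),
          dist (y (cfun hk x y Ns (b, p) i)) (y (cfun hk x y Ns (b, p) j)))
        ≤ ∑ b : Fin Ns, (if cls hk x y Ns b i = cls hk x y Ns b j
            then 102*δ*(Nat.factorial k)*(dist (x i) (x j)*Ns + gv hk x y i)
            else (Ns:ℝ)*(Nat.factorial k)*(9*gv hk x y j)) :=
      Finset.sum_le_sum (fun b _ => hinner b)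
    have hsplitb := Finset.sum_filter_add_sum_filter_not (univ : Finset (Fin Ns))
        (fun b => cls hk x y Ns b i = cls hk x y Ns b j)
        (fun b => if cls hk x y Ns b i = cls hk x y Ns b j
            then 102*δ*(Nat.factorial k)*(dist (x i) (x j)*Ns + gv hk x y i)
            else (Ns:ℝ)*(Nat.factorial k)*(9*gv hk x y j))
    have hgood : ∑ b ∈ (univ : Finset (Fin Ns)).filter
          (fun b => cls hk x y Ns b i = cls hk x y Ns b j),
          (if cls hk x y Ns b i = cls hk x y Ns b j
            then 102*δ*(Nat.factorial k)*(dist (x i) (x j)*Ns + gv hk x y i)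
            else (Ns:ℝ)*(Nat.factorial k)*(9*gv hk x y j))
        ≤ (Ns:ℝ) * (102*δ*(Nat.factorial k)*(dist (x i) (x j)*Ns + gv hk x y i)) := by
      have h1 : ∀ b ∈ (univ : Finset (Fin Ns)).filter
          (fun b => cls hk x y Ns b i = cls hk x y Ns b j),
          (if cls hk x y Ns b i = cls hk x y Ns b j
            then 102*δ*(Nat.factorial k)*(dist (x i) (x j)*Ns + gv hk x y i)
            else (Ns:ℝ)*(Nat.factorial k)*(9*gv hk x y j))
          ≤ 102*δ*(Nat.factorial k)*(dist (x i) (x j)*Ns + gv hk x y i) := by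
        intro b hb
        rw [if_pos (Finset.mem_filter.mp hb).2]
      calc _ ≤ ((univ : Finset (Fin Ns)).filter
            (fun b => cls hk x y Ns b i = cls hk x y Ns b j)).card
              • (102*δ*(Nat.factorial k)*(dist (x i) (x j)*Ns + gv hk x y i)) :=
            Finset.sum_le_card_nsmul _ _ _ h1
        _ ≤ (Ns:ℝ) * (102*δ*(Nat.factorial k)*(dist (x i) (x j)*Ns + gv hk x y i)) := by
            rw [nsmul_eq_mul]
            apply mul_le_mul_of_nonneg_right _ (by positivity)
            calc (((univ : Finset (Fin Ns)).filter _).card : ℝ)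
                ≤ ((univ : Finset (Fin Ns)).card : ℝ) := by
                  exact_mod_cast Finset.card_le_card (Finset.filter_subset _ _)
              _ = (Ns:ℝ) := by rw [Finset.card_univ, Fintype.card_fin]
    have hbad : ∑ b ∈ (univ : Finset (Fin Ns)).filter
          (fun b => ¬ (cls hk x y Ns b i = cls hk x y Ns b j)),
          (if cls hk x y Ns b i = cls hk x y Ns b j
            then 102*δ*(Nat.factorial k)*(dist (x i) (x j)*Ns + gv hk x y i)
            else (Ns:ℝ)*(Nat.factorial k)*(9*gv hk x y j))
        ≤ ((Ns:ℝ)*((3/2)*(dist (x i) (x j) / gv hk x y i)) + 1)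
            * ((Ns:ℝ)*(Nat.factorial k)*(9*gv hk x y j)) := by
      have h1 : ∀ b ∈ (univ : Finset (Fin Ns)).filter
          (fun b => ¬ (cls hk x y Ns b i = cls hk x y Ns b j)),
          (if cls hk x y Ns b i = cls hk x y Ns b j
            then 102*δ*(Nat.factorial k)*(dist (x i) (x j)*Ns + gv hk x y i)
            else (Ns:ℝ)*(Nat.factorial k)*(9*gv hk x y j))
          ≤ (Ns:ℝ)*(Nat.factorial k)*(9*gv hk x y j) := by
        intro b hb
        rw [if_neg (Finset.mem_filter.mp hb).2]
      have hcd := class_diff_count hk x y hNs i j hA0' hg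
      calc _ ≤ ((univ : Finset (Fin Ns)).filter
            (fun b => ¬ (cls hk x y Ns b i = cls hk x y Ns b j))).card
              • ((Ns:ℝ)*(Nat.factorial k)*(9*gv hk x y j)) :=
            Finset.sum_le_card_nsmul _ _ _ h1
        _ ≤ _ := by
            rw [nsmul_eq_mul]
            apply mul_le_mul_of_nonneg_right _ (by positivity)
            exact hcd
    -- put together
    calc (∑ b : Fin Ns, ∑ p : Fin Ns × Equiv.Perm (Fin k),
          dist (y (cfun hk x y Ns (b, p) i)) (y (cfun hk x y Ns (b, p) j)))
        ≤ ∑ b : Fin Ns, (if cls hk x y Ns b i = cls hk x y Ns b j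
            then 102*δ*(Nat.factorial k)*(dist (x i) (x j)*Ns + gv hk x y i)
            else (Ns:ℝ)*(Nat.factorial k)*(9*gv hk x y j)) := hbsum
      _ ≤ (Ns:ℝ) * (102*δ*(Nat.factorial k)*(dist (x i) (x j)*Ns + gv hk x y i))
            + ((Ns:ℝ)*((3/2)*(dist (x i) (x j) / gv hk x y i)) + 1)
              * ((Ns:ℝ)*(Nat.factorial k)*(9*gv hk x y j)) := by
          rw [← hsplitb]
          exact add_le_add hgood hbad
      _ ≤ _ := edge_arith δ (gv hk x y i) (gv hk x y j) (dist (x i) (x j)) (Ns:ℝ)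
            (Nat.factorial k) hδ hA0' hg hBDA hA4 hD0 hNr hF

end EdgeBound2





section Core

variable {X : Type} [MetricSpace X] {k : ℕ}

/-- symmetric sum of `gv` over an unordered pair -/
noncomputable def gsum (hk : 0 < k) (x y : Fin k → X) : Sym2 (Fin k) → ℝ :=
  Sym2.lift ⟨fun i j => gv hk x y i + gv hk x y j, fun i j => add_comm _ _⟩

lemma core (hk : 0 < k) (δ : ℝ) (hδ : 1 ≤ δ) (n₀ : ℕ) (hn₀ : (n₀:ℝ) ≤ δ + 1)
    (hcov : ∀ (z : X) (R : ℝ), ∃ s : Finset X, s.card ≤ 2^n₀ ∧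
      ∀ w ∈ Metric.ball z R, ∃ yy ∈ s, w ∈ Metric.ball yy (R/2))
    (q x y : Fin k → X)
    (hxy : ∀ i, dist (x i) (y i) ≤ 2 * dist (q i) (x i))
    (G : SimpleGraph (Fin k)) [Fintype G.edgeSet] :
    ∃ c : Fin k → Fin k,
      ∑ i, dist (q i) (y (c i)) + ∑ e ∈ G.edgeFinset, pairDist (fun i => y (c i)) e
        ≤ 600*δ*(∑ i, dist (q i) (x i) + ∑ e ∈ G.edgeFinset, pairDist x e) := by
  classical
  -- harmonic bound
  have hharm : harm ((2^n₀)^3) ≤ 6*δ := by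
    have h1 : 1 ≤ (2^n₀)^3 := Nat.one_le_pow _ _ (Nat.pow_pos (by norm_num))
    have h2 := harm_le_log ((2^n₀)^3) h1
    have h3 : Real.log (((2^n₀)^3 : ℕ) : ℝ) = 3 * ((n₀:ℝ) * Real.log 2) := by
      push_cast
      rw [← pow_mul]
      rw [Real.log_pow]
      push_cast
      ring
    have h4 : Real.log 2 < 0.6931471808 := Real.log_two_lt_d9
    have h5 : (0:ℝ) ≤ (n₀:ℝ) := Nat.cast_nonneg _
    have h6 : (0:ℝ) < Real.log 2 := Real.log_pos (by norm_num)
    rw [h3] at h2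
    nlinarith
  obtain ⟨Ns, hNsdef⟩ : ∃ Ns : ℕ, Ns = 2000 * (G.edgeFinset.card + 1) := ⟨_, rfl⟩
  have hNs : 0 < Ns := by rw [hNsdef]; positivity
  have hNr : (1:ℝ) ≤ (Ns:ℝ) := by exact_mod_cast hNs
  have hNr0 : (0:ℝ) < (Ns:ℝ) := by linarith
  set d : Fin k → ℝ := fun i => dist (q i) (x i) with hd
  have hd0 : ∀ i, 0 ≤ d i := fun i => dist_nonneg
  have hgd : ∀ i, gv hk x y i ≤ 2 * d i := by
    intro i
    calc gv hk x y i ≤ dist (x i) (y i) := gpt_le hk y (x i) i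
      _ ≤ 2 * d i := hxy i
  have hsumd : (0:ℝ) ≤ ∑ i, d i := Finset.sum_nonneg (fun i _ => hd0 i)
  have hsumD : (0:ℝ) ≤ ∑ e ∈ G.edgeFinset, pairDist x e := by
    apply Finset.sum_nonneg
    intro e _
    induction e using Sym2.ind with
    | _ i j =>
      have : pairDist x s(i,j) = dist (x i) (x j) := by simp [pairDist]
      rw [this]
      exact dist_nonneg
  have hcardΩ : ((univ : Finset (Fin Ns × Fin Ns × Equiv.Perm (Fin k))).card : ℝ)
      = (Ns:ℝ) * Ns * (Nat.factorial k) := by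
    rw [Finset.card_univ, Fintype.card_prod, Fintype.card_prod, Fintype.card_fin,
      Fintype.card_perm, Fintype.card_fin]
    push_cast
    ring
  -- vertex bound
  have hvert : ∀ (ω : Fin Ns × Fin Ns × Equiv.Perm (Fin k)) (i : Fin k),
      dist (q i) (y (cfun hk x y Ns ω i)) ≤ 9 * d i := by
    intro ω i
    have h1 := move_le hk x y hNs ω i
    have h2 := hgd i
    calc dist (q i) (y (cfun hk x y Ns ω i))
        ≤ dist (q i) (x i) + dist (x i) (y (cfun hk x y Ns ω i)) := dist_triangle _ _ _
      _ ≤ d i + 4 * gv hk x y i := by rw [hd]; exact add_le_add_right h1 _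
      _ ≤ 9 * d i := by linarith
  -- per edge bound
  have hedge : ∀ e ∈ G.edgeFinset,
      (∑ ω : Fin Ns × Fin Ns × Equiv.Perm (Fin k), pairDist (fun i => y (cfun hk x y Ns ω i)) e)
        ≤ ((Ns:ℝ)*Ns*(Nat.factorial k)) * (500*δ*pairDist x e + 500*δ*(gsum hk x y e)/Ns) := by
    intro e _
    induction e using Sym2.ind with
    | _ i j =>
      have hpd : ∀ f : Fin k → X, pairDist f s(i,j) = dist (f i) (f j) := by
        intro f; simp [pairDist]
      have hgs : gsum hk x y s(i,j) = gv hk x y i + gv hk x y j := by simp [gsum]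
      rw [hgs, hpd]
      rcases le_total (gv hk x y i) (gv hk x y j) with hg | hg
      · have := edge_bound hk x y hNs δ hδ n₀ hcov hharm i j hg
        calc (∑ ω : Fin Ns × Fin Ns × Equiv.Perm (Fin k),
              pairDist (fun i' => y (cfun hk x y Ns ω i')) s(i,j))
            = ∑ ω : Fin Ns × Fin Ns × Equiv.Perm (Fin k),
              dist (y (cfun hk x y Ns ω i)) (y (cfun hk x y Ns ω j)) := by
              apply Finset.sum_congr rfl; intro ω _; exact hpd _
          _ ≤ _ := this
      · have h2 := edge_bound hk x y hNs δ hδ n₀ hcov hharm j i hg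
        calc (∑ ω : Fin Ns × Fin Ns × Equiv.Perm (Fin k),
              pairDist (fun i' => y (cfun hk x y Ns ω i')) s(i,j))
            = ∑ ω : Fin Ns × Fin Ns × Equiv.Perm (Fin k),
              dist (y (cfun hk x y Ns ω j)) (y (cfun hk x y Ns ω i)) := by
              apply Finset.sum_congr rfl; intro ω _
              rw [hpd]; exact dist_comm _ _
          _ ≤ ((Ns:ℝ)*Ns*(Nat.factorial k)) *
                (500*δ*dist (x j) (x i) + 500*δ*(gv hk x y j + gv hk x y i)/Ns) := h2
          _ = ((Ns:ℝ)*Ns*(Nat.factorial k)) *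
                (500*δ*dist (x i) (x j) + 500*δ*(gv hk x y i + gv hk x y j)/Ns) := by
              rw [dist_comm (x j) (x i), add_comm (gv hk x y j) (gv hk x y i)]
  -- gsum bound
  have hgsum : ∀ e ∈ G.edgeFinset, gsum hk x y e ≤ 4 * ∑ i, d i := by
    intro e _
    induction e using Sym2.ind with
    | _ i j =>
      have hgs : gsum hk x y s(i,j) = gv hk x y i + gv hk x y j := by simp [gsum]
      rw [hgs]
      have h1 : d i ≤ ∑ l, d l := Finset.single_le_sum (fun l _ => hd0 l) (mem_univ i)
      have h2 : d j ≤ ∑ l, d l := Finset.single_le_sum (fun l _ => hd0 l) (mem_univ j)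
      have h3 := hgd i
      have h4 := hgd j
      linarith
  -- total bound
  set F : (Fin Ns × Fin Ns × Equiv.Perm (Fin k)) → ℝ :=
    fun ω => ∑ i, dist (q i) (y (cfun hk x y Ns ω i))
      + ∑ e ∈ G.edgeFinset, pairDist (fun i => y (cfun hk x y Ns ω i)) e with hF
  have htot : ∑ ω : Fin Ns × Fin Ns × Equiv.Perm (Fin k), F ω
      ≤ ((Ns:ℝ)*Ns*(Nat.factorial k)) *
          (600*δ*(∑ i, d i + ∑ e ∈ G.edgeFinset, pairDist x e)) := by
    have hsplit : ∑ ω : Fin Ns × Fin Ns × Equiv.Perm (Fin k), F ω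
        = (∑ ω : Fin Ns × Fin Ns × Equiv.Perm (Fin k), ∑ i, dist (q i) (y (cfun hk x y Ns ω i)))
          + ∑ ω : Fin Ns × Fin Ns × Equiv.Perm (Fin k),
              ∑ e ∈ G.edgeFinset, pairDist (fun i => y (cfun hk x y Ns ω i)) e := by
      rw [hF, Finset.sum_add_distrib]
    have hv : (∑ ω : Fin Ns × Fin Ns × Equiv.Perm (Fin k),
          ∑ i, dist (q i) (y (cfun hk x y Ns ω i)))
        ≤ ((Ns:ℝ)*Ns*(Nat.factorial k)) * (9 * ∑ i, d i) := by
      rw [Finset.sum_comm]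
      have h1 : ∀ i ∈ (univ : Finset (Fin k)),
          (∑ ω : Fin Ns × Fin Ns × Equiv.Perm (Fin k), dist (q i) (y (cfun hk x y Ns ω i)))
            ≤ ((Ns:ℝ)*Ns*(Nat.factorial k)) * (9 * d i) := by
        intro i _
        calc (∑ ω : Fin Ns × Fin Ns × Equiv.Perm (Fin k), dist (q i) (y (cfun hk x y Ns ω i)))
            ≤ (univ : Finset (Fin Ns × Fin Ns × Equiv.Perm (Fin k))).card • (9 * d i) :=
              Finset.sum_le_card_nsmul _ _ _ (fun ω _ => hvert ω i)
          _ = ((Ns:ℝ)*Ns*(Nat.factorial k)) * (9 * d i) := by rw [nsmul_eq_mul, hcardΩ]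
      calc (∑ i, ∑ ω : Fin Ns × Fin Ns × Equiv.Perm (Fin k),
            dist (q i) (y (cfun hk x y Ns ω i)))
          ≤ ∑ i, ((Ns:ℝ)*Ns*(Nat.factorial k)) * (9 * d i) := Finset.sum_le_sum h1
        _ = ((Ns:ℝ)*Ns*(Nat.factorial k)) * (9 * ∑ i, d i) := by
            rw [← Finset.mul_sum, ← Finset.mul_sum]
    have he : (∑ ω : Fin Ns × Fin Ns × Equiv.Perm (Fin k),
          ∑ e ∈ G.edgeFinset, pairDist (fun i => y (cfun hk x y Ns ω i)) e)
        ≤ ((Ns:ℝ)*Ns*(Nat.factorial k)) *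
            (500*δ*(∑ e ∈ G.edgeFinset, pairDist x e) + δ * ∑ i, d i) := by
      rw [Finset.sum_comm]
      calc (∑ e ∈ G.edgeFinset, ∑ ω : Fin Ns × Fin Ns × Equiv.Perm (Fin k),
            pairDist (fun i => y (cfun hk x y Ns ω i)) e)
          ≤ ∑ e ∈ G.edgeFinset, ((Ns:ℝ)*Ns*(Nat.factorial k)) *
              (500*δ*pairDist x e + 500*δ*(gsum hk x y e)/Ns) :=
            Finset.sum_le_sum hedge
        _ = ((Ns:ℝ)*Ns*(Nat.factorial k)) *
              (500*δ*(∑ e ∈ G.edgeFinset, pairDist x e)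
                + (500*δ/Ns)*(∑ e ∈ G.edgeFinset, gsum hk x y e)) := by
            rw [← Finset.mul_sum]
            congr 1
            rw [Finset.sum_add_distrib, Finset.mul_sum, Finset.mul_sum]
            congr 1
            apply Finset.sum_congr rfl
            intro e _
            ring
        _ ≤ _ := by
            apply mul_le_mul_of_nonneg_left _ (by positivity)
            apply add_le_add_right
            have hsg : (∑ e ∈ G.edgeFinset, gsum hk x y e)
                ≤ (G.edgeFinset.card : ℝ) * (4 * ∑ i, d i) := by
              calc (∑ e ∈ G.edgeFinset, gsum hk x y e)
                  ≤ G.edgeFinset.card • (4 * ∑ i, d i) :=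
                    Finset.sum_le_card_nsmul _ _ _ hgsum
                _ = (G.edgeFinset.card : ℝ) * (4 * ∑ i, d i) := by rw [nsmul_eq_mul]
            have hsg0 : (0:ℝ) ≤ ∑ e ∈ G.edgeFinset, gsum hk x y e := by
              apply Finset.sum_nonneg
              intro e _
              induction e using Sym2.ind with
              | _ i j =>
                have hgs : gsum hk x y s(i,j) = gv hk x y i + gv hk x y j := by simp [gsum]
                rw [hgs]
                have := gpt_nonneg hk y (x i)
                have := gpt_nonneg hk y (x j)
                positivity
            have hEc : (G.edgeFinset.card : ℝ) * 2000 ≤ (Ns : ℝ) := by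
              rw [hNsdef]
              push_cast
              linarith
            calc (500*δ/Ns)*(∑ e ∈ G.edgeFinset, gsum hk x y e)
                ≤ (500*δ/Ns)*((G.edgeFinset.card : ℝ) * (4 * ∑ i, d i)) := by
                  apply mul_le_mul_of_nonneg_left hsg (by positivity)
              _ ≤ δ * ∑ i, d i := by
                  rw [div_mul_eq_mul_div, div_le_iff₀ hNr0]
                  have hδ0 : (0:ℝ) < δ := by linarith
                  have h2000 : 2000 * (G.edgeFinset.card : ℝ) * (δ * ∑ i, d i)
                      ≤ (Ns:ℝ) * (δ * ∑ i, d i) := by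
                    apply mul_le_mul_of_nonneg_right _ (by positivity)
                    linarith
                  nlinarith
    calc ∑ ω : Fin Ns × Fin Ns × Equiv.Perm (Fin k), F ω
        = _ + _ := hsplit
      _ ≤ ((Ns:ℝ)*Ns*(Nat.factorial k)) * (9 * ∑ i, d i)
          + ((Ns:ℝ)*Ns*(Nat.factorial k)) *
            (500*δ*(∑ e ∈ G.edgeFinset, pairDist x e) + δ * ∑ i, d i) := add_le_add hv he
      _ ≤ _ := by
          rw [← mul_add]
          apply mul_le_mul_of_nonneg_left _ (by positivity)
          nlinarith [hsumd, hsumD, hδ]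
  -- existence
  have hne : ((univ : Finset (Fin Ns × Fin Ns × Equiv.Perm (Fin k)))).Nonempty := by
    have : Nonempty (Fin Ns × Fin Ns × Equiv.Perm (Fin k)) :=
      ⟨(⟨0, hNs⟩, ⟨0, hNs⟩, 1)⟩
    exact Finset.univ_nonempty
  have hconst : (∑ _ω : Fin Ns × Fin Ns × Equiv.Perm (Fin k),
      (600*δ*(∑ i, d i + ∑ e ∈ G.edgeFinset, pairDist x e)))
      = ((Ns:ℝ)*Ns*(Nat.factorial k)) *
          (600*δ*(∑ i, d i + ∑ e ∈ G.edgeFinset, pairDist x e)) := by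
    rw [Finset.sum_const, nsmul_eq_mul, hcardΩ]
  obtain ⟨ω, -, hω⟩ := Finset.exists_le_of_sum_le hne (htot.trans_eq hconst.symm)
  refine ⟨cfun hk x y Ns ω, ?_⟩
  simp only [hF] at hω
  exact hω

end Core


end SNNPG

/-- there is a universal constant `C > 0` such that if `(X, dist)` has doubling
dimension at most `δ` (every ball can be covered by at most `2^δ` balls of half the radius),
then for every SNN instance in `X` there is an assignment with values in `P̂` of SNN cost at
most `C · δ` times the optimum over `P`; i.e. the pruning gap is `O(δ)`. -/
theorem inn_pruning_gap_doubling :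
    ∃ C : ℝ, 0 < C ∧
      ∀ (X : Type) [MetricSpace X] (δ : ℝ), 1 ≤ δ →
        (∀ (x : X) (R : ℝ), ∃ s : Finset X, (s.card : ℝ) ≤ (2 : ℝ) ^ δ ∧
          ∀ z ∈ Metric.ball x R, ∃ y ∈ s, z ∈ Metric.ball y (R / 2)) →
        ∀ (k : ℕ), 1 ≤ k →
          ∀ (P : Finset X), P.Nonempty →
            ∀ (q : Fin k → X) (G : SimpleGraph (Fin k)) [Fintype G.edgeSet]
              (phat : Fin k → X), (∀ i, phat i ∈ P) →
              (∀ i, ∀ pt ∈ P, dist (q i) (phat i) ≤ dist (q i) pt) →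
              ∃ p : Fin k → X, (∀ i, ∃ j, p i = phat j) ∧
                ∀ ps : Fin k → X, (∀ i, ps i ∈ P) →
                  ∑ i, dist (q i) (p i) + ∑ e ∈ G.edgeFinset, pairDist p e ≤
                    C * δ *
                      (∑ i, dist (q i) (ps i) + ∑ e ∈ G.edgeFinset, pairDist ps e) := by
  classical
  refine ⟨600, by norm_num, ?_⟩
  intro X _ δ hδ hdbl k hk P hP q G _ phat hphatP hNN
  set n₀ := ⌈δ⌉₊ with hn₀def
  have hδ0 : (0:ℝ) ≤ δ := by linarith
  have hn₀le : (n₀:ℝ) ≤ δ + 1 := le_of_lt (Nat.ceil_lt_add_one hδ0)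
  have hδn₀ : δ ≤ (n₀:ℝ) := Nat.le_ceil δ
  have hcov : ∀ (z : X) (R : ℝ), ∃ s : Finset X, s.card ≤ 2^n₀ ∧
      ∀ w ∈ Metric.ball z R, ∃ yy ∈ s, w ∈ Metric.ball yy (R/2) := by
    intro z R
    obtain ⟨s, hs1, hs2⟩ := hdbl z R
    refine ⟨s, ?_, hs2⟩
    have h1 : (2:ℝ)^δ ≤ (2:ℝ)^(n₀:ℝ) := Real.rpow_le_rpow_of_exponent_le (by norm_num) hδn₀
    have h2 : (2:ℝ)^((n₀:ℕ):ℝ) = ((2^n₀ : ℕ):ℝ) := by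
      rw [Real.rpow_natCast]
      push_cast
      ring
    have h3 : (s.card : ℝ) ≤ ((2^n₀ : ℕ):ℝ) := le_trans hs1 (le_of_le_of_eq h1 h2)
    exact_mod_cast h3
  have hk0 : 0 < k := hk
  haveI : Nonempty {a // a ∈ P} := ⟨⟨hP.choose, hP.choose_spec⟩⟩
  set cost : (Fin k → {a // a ∈ P}) → ℝ := fun f =>
    ∑ i, dist (q i) ((f i):X) + ∑ e ∈ G.edgeFinset, pairDist (fun i => ((f i):X)) e with hcost
  obtain ⟨f₀, -, hf₀⟩ := Finset.exists_min_image (univ : Finset (Fin k → {a // a ∈ P})) cost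
    Finset.univ_nonempty
  set x : Fin k → X := fun i => (f₀ i : X) with hx
  have hxy : ∀ i, dist (x i) (phat i) ≤ 2 * dist (q i) (x i) := by
    intro i
    have h1 : dist (q i) (phat i) ≤ dist (q i) (x i) := hNN i (x i) (f₀ i).2
    calc dist (x i) (phat i) ≤ dist (x i) (q i) + dist (q i) (phat i) := dist_triangle _ _ _
      _ ≤ dist (x i) (q i) + dist (q i) (x i) := by linarith
      _ = 2 * dist (q i) (x i) := by rw [dist_comm (x i) (q i)]; ring
  obtain ⟨c, hc⟩ := SNNPG.core hk0 δ hδ n₀ hn₀le hcov q x phat hxy G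
  refine ⟨fun i => phat (c i), fun i => ⟨c i, rfl⟩, ?_⟩
  intro ps hps
  have hopt : ∑ i, dist (q i) (x i) + ∑ e ∈ G.edgeFinset, pairDist x e
      ≤ ∑ i, dist (q i) (ps i) + ∑ e ∈ G.edgeFinset, pairDist ps e := by
    have h := hf₀ (fun i => ⟨ps i, hps i⟩) (mem_univ _)
    simpa [hcost, hx] using h
  calc ∑ i, dist (q i) (phat (c i)) + ∑ e ∈ G.edgeFinset, pairDist (fun i => phat (c i)) e
      ≤ 600*δ*(∑ i, dist (q i) (x i) + ∑ e ∈ G.edgeFinset, pairDist x e) := hc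
    _ ≤ 600*δ*(∑ i, dist (q i) (ps i) + ∑ e ∈ G.edgeFinset, pairDist ps e) := by
        apply mul_le_mul_of_nonneg_left hopt (by positivity)
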